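/- Let (R,F) be a contributing labeled U-ribbon of length 2ℓ for a bipartite graph U on [d]×[d] containing the edges (1,1),...,(k,k), where the label classes {F(a_j^i),F(b_j^i)} for j ≤ k and the remaining labels are disjoint as specified. Then the number of distinct labels |{F(u) : u ∈ R}| is at most (2d − k)ℓ + k. -/

import Mathlib

/-- The multiset of labeled edges of a labeled `U`-ribbon of length `2ℓ`.
Vertices are `a_j^i = (true, i, j)` and `b_j^i = (false, i, j)` for
`i ∈ [ℓ]`, `j ∈ [d]`; for each `i` and each edge `(x,y) ∈ U` the ribbon has
the edges `{a_x^i, b_y^i}` and `{a_x^{i+1}, b_y^i}` (cyclically in `i`). -/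
def ribbonEdges {α : Type*} (ℓ d : ℕ) [NeZero ℓ]
    (U : Finset (Fin d × Fin d)) (F : Bool × Fin ℓ × Fin d → α) :
    Multiset (Sym2 α) :=
  ∑ p ∈ (Finset.univ : Finset (Fin ℓ)) ×ˢ U,
    ({s(F (true, p.1, p.2.1), F (false, p.1, p.2.2)),
      s(F (true, p.1 + 1, p.2.1), F (false, p.1, p.2.2))} :
        Multiset (Sym2 α))

/-- Along a walk, the number of distinct vertices is at most the number of
distinct edges plus one. -/
private lemma walk_vertex_bound {α : Type*} [DecidableEq α] (w : ℕ → α) :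
    ∀ n : ℕ, ((Finset.range (n+1)).image w).card ≤
      ((Finset.range n).image (fun t => s(w t, w (t+1)))).card + 1 := by
  intro n
  induction n with
  | zero => simp
  | succ n ih =>
    by_cases h : w (n+1) ∈ (Finset.range (n+1)).image w
    · have hv : (Finset.range (n+2)).image w = (Finset.range (n+1)).image w := by
        rw [Finset.range_add_one, Finset.image_insert, Finset.insert_eq_self.2 h]
      rw [hv]
      refine ih.trans ?_
      have : ((Finset.range n).image (fun t => s(w t, w (t+1)))).card ≤
          ((Finset.range (n+1)).image (fun t => s(w t, w (t+1)))).card :=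
        Finset.card_le_card (Finset.image_subset_image (Finset.range_subset_range.2 (Nat.le_succ n)))
      omega
    · have hv : (Finset.range (n+2)).image w
          = insert (w (n+1)) ((Finset.range (n+1)).image w) := by
        rw [Finset.range_add_one, Finset.image_insert]
      have he : (Finset.range (n+1)).image (fun t => s(w t, w (t+1)))
          = insert (s(w n, w (n+1)))
              ((Finset.range n).image (fun t => s(w t, w (t+1)))) := by
        rw [Finset.range_add_one, Finset.image_insert]
      have hne : s(w n, w (n+1)) ∉
          (Finset.range n).image (fun t => s(w t, w (t+1))) := by
        intro hmem
        obtain ⟨t, ht, hte⟩ := Finset.mem_image.1 hmem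
        have ht' : t < n := Finset.mem_range.1 ht
        have hmemv : w (n+1) ∈ s(w t, w (t+1)) := by rw [hte]; simp
        rcases Sym2.mem_iff.1 hmemv with h1 | h1
        · exact h (Finset.mem_image.2 ⟨t, Finset.mem_range.2 (by omega), h1.symm⟩)
        · exact h (Finset.mem_image.2 ⟨t+1, Finset.mem_range.2 (by omega), h1.symm⟩)
      rw [hv, he, Finset.card_insert_of_notMem h, Finset.card_insert_of_notMem hne]
      omega

/-- If every multiplicity in a multiset is even, the number of distinct
elements is at most half the size. -/
private lemma toFinset_card_le_of_even {α : Type*} [DecidableEq α] (M : Multiset α)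
    (h : ∀ a, Even (M.count a)) : 2 * M.toFinset.card ≤ Multiset.card M := by
  calc 2 * M.toFinset.card = ∑ _a ∈ M.toFinset, 2 := by
        rw [Finset.sum_const, smul_eq_mul, mul_comm]
  _ ≤ ∑ a ∈ M.toFinset, M.count a := by
      refine Finset.sum_le_sum fun a ha => ?_
      have h1 : 1 ≤ M.count a := Multiset.one_le_count_iff_mem.2 (Multiset.mem_toFinset.1 ha)
      rcases h a with ⟨m, hm⟩
      omega
  _ = Multiset.card M := Multiset.toFinset_sum_count_eq M

open Fin.NatCast

/-- Lemma 4.20: a contributing labeled `U`-ribbon of length `2ℓ`, where `U`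
contains the edges `(1,1),…,(k,k)` and the label classes of the first `k`
coordinates and of the remaining coordinates are disjoint, has at most
`(2d − k)ℓ + k` distinct labels. -/
theorem ribbon_unique_label_bound {α : Type*} [DecidableEq α]
    (ℓ d k : ℕ) [NeZero ℓ] (hk : k ≤ d)
    (U : Finset (Fin d × Fin d)) (F : Bool × Fin ℓ × Fin d → α)
    (hU : ∀ j : Fin d, (j : ℕ) < k → (j, j) ∈ U)
    (hlab : ∀ e ∈ ribbonEdges ℓ d U F, ¬ Sym2.IsDiag e)
    (hcontrib : ∀ e : Sym2 α, Even ((ribbonEdges ℓ d U F).count e))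
    (hdisj : ∀ j j' : Fin d, (j : ℕ) < k → j ≠ j' →
      Disjoint
        ((Finset.univ.image fun i : Fin ℓ => F (true, i, j)) ∪
          (Finset.univ.image fun i : Fin ℓ => F (false, i, j)))
        ((Finset.univ.image fun i : Fin ℓ => F (true, i, j')) ∪
          (Finset.univ.image fun i : Fin ℓ => F (false, i, j')))) :
    ((Finset.univ : Finset (Bool × Fin ℓ × Fin d)).image F).card ≤
      (2 * d - k) * ℓ + k := by
  classical
  -- label class of coordinate j
  set C : Fin d → Finset α := fun j =>
    ((Finset.univ.image fun i : Fin ℓ => F (true, i, j)) ∪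
      (Finset.univ.image fun i : Fin ℓ => F (false, i, j))) with hC
  have hmemC : ∀ (b : Bool) (i : Fin ℓ) (x : Fin d), F (b, i, x) ∈ C x := by
    intro b i x
    simp only [hC, Finset.mem_union, Finset.mem_image]
    cases b
    · exact Or.inr ⟨i, Finset.mem_univ _, rfl⟩
    · exact Or.inl ⟨i, Finset.mem_univ _, rfl⟩
  -- the image decomposes into the classes
  have himg : (Finset.univ : Finset (Bool × Fin ℓ × Fin d)).image F ⊆
      Finset.univ.biUnion C := by
    intro a ha
    obtain ⟨⟨b, i, j⟩, _, rfl⟩ := Finset.mem_image.1 ha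
    exact Finset.mem_biUnion.2 ⟨j, Finset.mem_univ _, hmemC b i j⟩
  -- crude bound for any class
  have hcrude : ∀ j : Fin d, (C j).card ≤ 2 * ℓ := by
    intro j
    have key : ((Finset.univ.image fun i : Fin ℓ => F (true, i, j)) ∪
        (Finset.univ.image fun i : Fin ℓ => F (false, i, j))).card ≤ 2 * ℓ := by
      refine (Finset.card_union_le _ _).trans ?_
      have h1 := Finset.card_image_le (s := (Finset.univ : Finset (Fin ℓ)))
        (f := fun i : Fin ℓ => F (true, i, j))
      have h2 := Finset.card_image_le (s := (Finset.univ : Finset (Fin ℓ)))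
        (f := fun i : Fin ℓ => F (false, i, j))
      simp only [Finset.card_univ, Fintype.card_fin] at h1 h2
      omega
    simpa [hC] using key
  -- strong bound for classes j with j < k
  have hstrong : ∀ j : Fin d, (j : ℕ) < k → (C j).card ≤ ℓ + 1 := by
    intro j hj
    -- the cycle of edges at coordinate j
    set e1 : Fin ℓ → Sym2 α := fun i => s(F (true, i, j), F (false, i, j)) with he1
    set e2 : Fin ℓ → Sym2 α := fun i => s(F (true, i+1, j), F (false, i, j)) with he2
    set Cj : Multiset (Sym2 α) := ∑ i : Fin ℓ, ({e1 i, e2 i} : Multiset (Sym2 α)) with hCj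
    -- endpoints of edges of Cj lie in C j
    have hend : ∀ e ∈ Cj, ∀ x ∈ e, x ∈ C j := by
      intro e he x hx
      obtain ⟨i, _, hi⟩ := Multiset.mem_sum.1 he
      simp only [Multiset.insert_eq_cons, Multiset.mem_cons, Multiset.mem_singleton] at hi
      rcases hi with rfl | rfl
      · simp only [he1, Sym2.mem_iff] at hx
        rcases hx with rfl | rfl
        exacts [hmemC true i j, hmemC false i j]
      · simp only [he2, Sym2.mem_iff] at hx
        rcases hx with rfl | rfl
        exacts [hmemC true (i+1) j, hmemC false i j]
    -- multiplicities in Cj coincide with multiplicities in ribbonEdges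
    have hcount : ∀ e ∈ Cj, (ribbonEdges ℓ d U F).count e = Cj.count e := by
      intro e he
      have hediag : ∀ x ∈ e, x ∈ C j := hend e he
      rw [ribbonEdges, Multiset.count_sum']
      rw [← Finset.sum_filter_add_sum_filter_not _ (fun p : Fin ℓ × Fin d × Fin d => p.2 = (j, j))]
      have hrest : ∑ p ∈ (Finset.univ ×ˢ U).filter
          (fun p : Fin ℓ × Fin d × Fin d => ¬ p.2 = (j, j)),
          Multiset.count e ({s(F (true, p.1, p.2.1), F (false, p.1, p.2.2)),
            s(F (true, p.1 + 1, p.2.1), F (false, p.1, p.2.2))} : Multiset (Sym2 α)) = 0 := by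
        refine Finset.sum_eq_zero fun p hp => ?_
        obtain ⟨hpU, hpne⟩ := Finset.mem_filter.1 hp
        obtain ⟨i, x, y⟩ := p
        have hxy : x ≠ j ∨ y ≠ j := by
          by_contra hcon
          push_neg at hcon
          exact hpne (by simp [hcon.1, hcon.2])
        have hnotin : ∀ i' : Fin ℓ, s(F (true, i', x), F (false, i, y)) ≠ e := by
          intro i' hEq
          rcases hxy with hx | hy
          · have hmem : F (true, i', x) ∈ e := by rw [← hEq]; simp
            have h1 : F (true, i', x) ∈ C j := hediag _ hmem
            exact Finset.disjoint_left.1 (hdisj j x hj (Ne.symm hx)) h1 (hmemC true i' x)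
          · have hmem : F (false, i, y) ∈ e := by rw [← hEq]; simp
            have h1 : F (false, i, y) ∈ C j := hediag _ hmem
            exact Finset.disjoint_left.1 (hdisj j y hj (Ne.symm hy)) h1 (hmemC false i y)
        rw [Multiset.count_eq_zero]
        simp only [Multiset.insert_eq_cons, Multiset.mem_cons, Multiset.mem_singleton]
        rintro (h | h)
        · exact hnotin i h.symm
        · exact hnotin (i+1) h.symm
      rw [hrest, add_zero]
      have hfil : (Finset.univ ×ˢ U).filter (fun p : Fin ℓ × Fin d × Fin d => p.2 = (j, j))
          = Finset.univ ×ˢ ({(j, j)} : Finset (Fin d × Fin d)) := by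
        ext ⟨i, x, y⟩
        simp only [Finset.mem_filter, Finset.mem_product, Finset.mem_univ, true_and,
          Finset.mem_singleton]
        constructor
        · rintro ⟨_, h⟩; exact h
        · rintro h; exact ⟨h ▸ hU j hj, h⟩
      rw [hfil, Finset.sum_product, hCj, Multiset.count_sum']
      refine Finset.sum_congr rfl fun i _ => ?_
      simp [Finset.sum_singleton, he1, he2]
    -- every multiplicity in Cj is even
    have heven : ∀ e, Even (Cj.count e) := by
      intro e
      by_cases he : e ∈ Cj
      · rw [← hcount e he]; exact hcontrib e
      · rw [Multiset.count_eq_zero.2 he]; exact Even.zero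
    -- hence Cj has at most ℓ distinct edges
    have hcard : Multiset.card Cj = 2 * ℓ := by
      rw [hCj, Multiset.card_sum]
      simp [mul_comm]
    have hedges : Cj.toFinset.card ≤ ℓ := by
      have := toFinset_card_le_of_even Cj heven
      omega
    -- the closed walk through coordinate j
    set w : ℕ → α := fun t => if t % 2 = 0 then F (true, ((t/2 : ℕ) : Fin ℓ), j)
      else F (false, ((t/2 : ℕ) : Fin ℓ), j) with hw
    have hwa : ∀ i : ℕ, w (2*i) = F (true, (i : Fin ℓ), j) := by
      intro i
      have h1 : (2*i) % 2 = 0 := by omega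
      have h2 : (2*i) / 2 = i := by omega
      simp [hw, h1, h2]
    have hwb : ∀ i : ℕ, w (2*i+1) = F (false, (i : Fin ℓ), j) := by
      intro i
      have h1 : (2*i+1) % 2 = 1 := by omega
      have h2 : (2*i+1) / 2 = i := by omega
      simp [hw, h1, h2]
    -- the class is contained in the walk's vertex set
    have hsub : C j ⊆ (Finset.range (2*ℓ+1)).image w := by
      intro a ha
      simp only [hC, Finset.mem_union, Finset.mem_image] at ha
      rcases ha with ⟨i, _, rfl⟩ | ⟨i, _, rfl⟩
      · refine Finset.mem_image.2 ⟨2*(i:ℕ), Finset.mem_range.2 (by have := i.isLt; omega), ?_⟩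
        rw [hwa, Fin.cast_val_eq_self]
      · refine Finset.mem_image.2 ⟨2*(i:ℕ)+1, Finset.mem_range.2 (by have := i.isLt; omega), ?_⟩
        rw [hwb, Fin.cast_val_eq_self]
    -- the walk's edges all lie in Cj
    have hwedge : (Finset.range (2*ℓ)).image (fun t => s(w t, w (t+1))) ⊆
        Cj.toFinset := by
      intro e he
      obtain ⟨t, ht, rfl⟩ := Finset.mem_image.1 he
      have ht' : t < 2*ℓ := Finset.mem_range.1 ht
      rw [Multiset.mem_toFinset]
      rcases Nat.even_or_odd t with ⟨i, hi⟩ | ⟨i, hi⟩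
      · -- t = i + i : edge e1 i
        subst hi
        refine Multiset.mem_sum.2 ⟨(i : Fin ℓ), Finset.mem_univ _, ?_⟩
        have heq : s(w (i+i), w (i+i+1)) = e1 ((i : ℕ) : Fin ℓ) := by
          simp only [he1]
          rw [show i + i = 2*i by ring, hwa, hwb]
        rw [heq]
        simp
      · -- t = 2i+1 : edge e2 i (swapped)
        subst hi
        refine Multiset.mem_sum.2 ⟨(i : Fin ℓ), Finset.mem_univ _, ?_⟩
        have hcast : ((i+1 : ℕ) : Fin ℓ) = ((i : ℕ) : Fin ℓ) + 1 := by push_cast; ring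
        have heq : s(w (2*i+1), w (2*i+1+1)) = e2 ((i : ℕ) : Fin ℓ) := by
          simp only [he2]
          rw [show 2*i+1+1 = 2*(i+1) by ring, hwa, hwb, hcast]
          exact Sym2.eq_swap
        rw [heq]
        simp
    calc (C j).card ≤ ((Finset.range (2*ℓ+1)).image w).card := Finset.card_le_card hsub
      _ ≤ ((Finset.range (2*ℓ)).image (fun t => s(w t, w (t+1)))).card + 1 :=
        walk_vertex_bound w (2*ℓ)
      _ ≤ Cj.toFinset.card + 1 := by
        have := Finset.card_le_card hwedge; omega
      _ ≤ ℓ + 1 := by omega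
  -- put the bounds together
  have hcardfil : (Finset.univ.filter fun j : Fin d => (j : ℕ) < k).card = k := by
    rw [show (Finset.univ.filter fun j : Fin d => (j:ℕ) < k)
        = (Finset.range k).attachFin (fun m hm => lt_of_lt_of_le (Finset.mem_range.1 hm) hk) by
      ext j; simp]
    rw [Finset.card_attachFin, Finset.card_range]
  have hcardfilneg : (Finset.univ.filter fun j : Fin d => ¬ (j : ℕ) < k).card = d - k := by
    have := Finset.card_filter_add_card_filter_not
      (s := (Finset.univ : Finset (Fin d))) (p := fun j : Fin d => (j : ℕ) < k)
    simp only [Finset.card_univ, Fintype.card_fin] at this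
    omega
  calc ((Finset.univ : Finset (Bool × Fin ℓ × Fin d)).image F).card
      ≤ (Finset.univ.biUnion C).card := Finset.card_le_card himg
    _ ≤ ∑ j : Fin d, (C j).card := Finset.card_biUnion_le
    _ ≤ ∑ j : Fin d, (if (j : ℕ) < k then ℓ + 1 else 2 * ℓ) := by
        refine Finset.sum_le_sum fun j _ => ?_
        by_cases hj : (j : ℕ) < k
        · rw [if_pos hj]; exact hstrong j hj
        · rw [if_neg hj]; exact hcrude j
    _ = k * (ℓ + 1) + (d - k) * (2 * ℓ) := by
        rw [Finset.sum_ite, Finset.sum_const, Finset.sum_const, smul_eq_mul, smul_eq_mul,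
          hcardfil, hcardfilneg]
    _ ≤ (2 * d - k) * ℓ + k := by
        obtain ⟨m, rfl⟩ := Nat.exists_eq_add_of_le hk
        have h1 : 2 * (k + m) - k = k + 2 * m := by omega
        have h2 : k + m - k = m := by omega
        rw [h1, h2]
        exact le_of_eq (by ring)
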